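/- Assume α_i ∈ (0,1] and ω_i + δ'_i > 0 for every i, fix nonnegative initial vectors x(0), y(0) ∈ ℝⁿ, and let Q ⊆ {1,…,n}×{1,…,n} be a candidate edge set such that ρ(N_{−P}) < 1 for every P ⊆ Q. Then the set function P ↦ σ^L(P) = 1ᵀ·A^{−1}·(D·(I − N_{−P})^{−1} − I)·(x(0) + W·(W + D')^{−1}·y(0)) is supermodular on subsets of Q: for all P ⊆ P' ⊆ Q and every edge e ∈ Q \ P', one has σ^L(P ∪ {e}) − σ^L(P) ≤ σ^L(P' ∪ {e}) − σ^L(P'). (Second part of Lemma 2.) -/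

import Mathlib

open Matrix Filter Finset

/-- Spectral radius of a real square matrix: the maximum modulus of its complex
eigenvalues (elements of the spectrum of the matrix viewed over `ℂ`). -/
noncomputable def specRad {n : ℕ} (M : Matrix (Fin n) (Fin n) ℝ) : ℝ :=
  sSup {r : ℝ | ∃ μ : ℂ, μ ∈ spectrum ℂ (M.map (Complex.ofReal)) ∧ r = ‖μ‖}

/-- The matrix `B` with the entries indexed by the edge set `P` deleted (set to `0`). -/
def Bdel {n : ℕ} (B : Matrix (Fin n) (Fin n) ℝ) (P : Finset (Fin n × Fin n)) :
    Matrix (Fin n) (Fin n) ℝ :=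
  Matrix.of fun i j => if (i, j) ∈ P then 0 else B i j

/-- The lower-bound set function
`σᴸ(P) = 1ᵀ·A⁻¹·(D·(I − N₋ₚ)⁻¹ − I)·(x0 + W·(W + D')⁻¹·y0)`. -/
noncomputable def sigmaL {n : ℕ} (α ω δ δ' s x0 y0 : Fin n → ℝ)
    (B : Matrix (Fin n) (Fin n) ℝ) (P : Finset (Fin n × Fin n)) : ℝ :=
  (fun _ => (1 : ℝ)) ⬝ᵥ
    ((Matrix.diagonal α)⁻¹ *
      (Matrix.diagonal δ *
        (1 - (1 - Matrix.diagonal δ +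
          Matrix.diagonal α * Matrix.diagonal s * Bdel B P))⁻¹ - 1)) *ᵥ
      (x0 + (Matrix.diagonal ω * (Matrix.diagonal ω + Matrix.diagonal δ')⁻¹) *ᵥ y0)

section Aux

attribute [local instance] Matrix.linftyOpNormedRing Matrix.linftyOpNormedAlgebra
  Matrix.linftyOpNormedAddCommGroup Matrix.linftyOpNormedSpace

variable {n : ℕ}

private lemma hasSum_entry {f : ℕ → Matrix (Fin n) (Fin n) ℝ} {S : Matrix (Fin n) (Fin n) ℝ}
    (h : HasSum f S) (i j : Fin n) : HasSum (fun k => f k i j) (S i j) :=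
  h.map (Matrix.entryLinearMap ℝ ℝ i j)
    (((continuous_apply j).comp (continuous_apply i) : _))

private lemma nnnorm_map_ofReal (A : Matrix (Fin n) (Fin n) ℝ) :
    ‖A.map (Complex.ofReal)‖₊ = ‖A‖₊ := by
  simp [Matrix.linfty_opNNNorm_def, Matrix.map_apply]

private lemma spectralRadius_lt_one (M : Matrix (Fin n) (Fin n) ℝ) (h : specRad M < 1) :
    spectralRadius ℂ (M.map (Complex.ofReal)) < 1 := by
  have hb : BddAbove {r : ℝ | ∃ μ : ℂ, μ ∈ spectrum ℂ (M.map (Complex.ofReal)) ∧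
      r = ‖μ‖} := by
    refine ⟨‖M.map (Complex.ofReal)‖ * ‖(1 : Matrix (Fin n) (Fin n) ℂ)‖, ?_⟩
    rintro r ⟨μ, hμ, rfl⟩
    exact spectrum.norm_le_norm_mul_of_mem hμ
  have key : spectralRadius ℂ (M.map (Complex.ofReal)) ≤ ENNReal.ofReal (specRad M) := by
    refine iSup₂_le fun μ hμ => ?_
    have h1 : ‖μ‖ ≤ specRad M := le_csSup hb ⟨μ, hμ, rfl⟩
    have h2 : (‖μ‖₊ : ENNReal) = ENNReal.ofReal ‖μ‖ := by
      rw [← coe_nnnorm, ENNReal.ofReal_coe_nnreal]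
    rw [h2]
    exact ENNReal.ofReal_le_ofReal h1
  exact lt_of_le_of_lt key (ENNReal.ofReal_lt_one.mpr h)

/-- Neumann series for a real matrix with spectral radius below one. -/
private lemma neumann (M : Matrix (Fin n) (Fin n) ℝ) (h : specRad M < 1) :
    ∃ S : Matrix (Fin n) (Fin n) ℝ, HasSum (fun k => M ^ k) S ∧
      (1 - M) * S = 1 ∧ S * (1 - M) = 1 ∧ (1 - M)⁻¹ = S := by
  obtain ⟨r, hr1, hr2⟩ := ENNReal.lt_iff_exists_nnreal_btwn.mp (spectralRadius_lt_one M h)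
  have hrlt : (r : ℝ) < 1 := by exact_mod_cast hr2
  have hG := spectrum.pow_nnnorm_pow_one_div_tendsto_nhds_spectralRadius
    (M.map (Complex.ofReal))
  have hev : ∀ᶠ k : ℕ in atTop,
      ((‖(M.map (Complex.ofReal)) ^ k‖₊ : ENNReal) ^ (1 / (k:ℝ))) < r :=
    hG.eventually_lt_const hr1
  have hev2 : ∀ᶠ k : ℕ in atTop, ‖M ^ k‖ ≤ (r : ℝ) ^ k := by
    filter_upwards [hev, eventually_ge_atTop 1] with k hk hk1
    have hkne : (k : ℝ) ≠ 0 := by positivity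
    have : ((‖(M.map (Complex.ofReal)) ^ k‖₊ : ENNReal)) ≤ (r : ENNReal) ^ k := by
      have := ENNReal.rpow_le_rpow hk.le (by positivity : (0:ℝ) ≤ (k:ℝ))
      rwa [← ENNReal.rpow_mul, one_div, inv_mul_cancel₀ hkne, ENNReal.rpow_one,
        ENNReal.rpow_natCast] at this
    have hnn : ‖(M.map (Complex.ofReal)) ^ k‖₊ ≤ r ^ k := by exact_mod_cast this
    have hpow : (M.map (Complex.ofReal)) ^ k = (M ^ k).map (Complex.ofReal) := by
      have := map_pow (Complex.ofRealHom.mapMatrix) M k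
      simp only [RingHom.mapMatrix_apply] at this
      exact this.symm
    have heq : ‖(M.map (Complex.ofReal)) ^ k‖₊ = ‖M ^ k‖₊ := by
      rw [hpow]; exact nnnorm_map_ofReal (M ^ k)
    calc ‖M ^ k‖ = ((‖M ^ k‖₊ : ℝ)) := rfl
      _ ≤ ((r ^ k : NNReal) : ℝ) := by exact_mod_cast heq ▸ hnn
      _ = (r : ℝ) ^ k := by push_cast; ring
  have hsum : Summable (fun k : ℕ => M ^ k) :=
    Summable.of_norm_bounded_eventually_nat
      (summable_geometric_of_lt_one r.2 hrlt) hev2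
  obtain ⟨S, hS⟩ := hsum
  have hshift : HasSum (fun k : ℕ => M ^ (k + 1)) (S - 1) := by
    refine (hasSum_nat_add_iff 1).mpr ?_
    simpa using hS
  have hl : M * S = S - 1 := by
    have h1 : HasSum (fun k : ℕ => M * M ^ k) (M * S) := hS.mul_left M
    have h2 : HasSum (fun k : ℕ => M * M ^ k) (S - 1) := by
      simpa [pow_succ'] using hshift
    exact h1.unique h2
  have hr' : S * M = S - 1 := by
    have h1 : HasSum (fun k : ℕ => M ^ k * M) (S * M) := hS.mul_right M
    have h2 : HasSum (fun k : ℕ => M ^ k * M) (S - 1) := by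
      simpa [pow_succ] using hshift
    exact h1.unique h2
  have hL : (1 - M) * S = 1 := by rw [sub_mul, one_mul, hl, sub_sub_cancel]
  have hR : S * (1 - M) = 1 := by rw [mul_sub, mul_one, hr', sub_sub_cancel]
  exact ⟨S, hS, hL, hR, Matrix.inv_eq_right_inv hL⟩

private lemma mul_entry_nonneg {A B : Matrix (Fin n) (Fin n) ℝ}
    (hA : ∀ i j, 0 ≤ A i j) (hB : ∀ i j, 0 ≤ B i j) (i j : Fin n) :
    0 ≤ (A * B) i j := by
  rw [Matrix.mul_apply]
  exact Finset.sum_nonneg fun k _ => mul_nonneg (hA i k) (hB k j)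

private lemma mul_entry_mono {A A' B B' : Matrix (Fin n) (Fin n) ℝ}
    (hA0 : ∀ i j, 0 ≤ A i j) (hB0 : ∀ i j, 0 ≤ B i j)
    (hA : ∀ i j, A i j ≤ A' i j) (hB : ∀ i j, B i j ≤ B' i j) (i j : Fin n) :
    (A * B) i j ≤ (A' * B') i j := by
  rw [Matrix.mul_apply, Matrix.mul_apply]
  exact Finset.sum_le_sum fun k _ =>
    mul_le_mul (hA i k) (hB k j) (hB0 k j) (le_trans (hA0 i k) (hA i k))

private lemma pow_entry_nonneg {M : Matrix (Fin n) (Fin n) ℝ}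
    (hM : ∀ i j, 0 ≤ M i j) (k : ℕ) : ∀ i j, 0 ≤ (M ^ k) i j := by
  induction k with
  | zero =>
    intro i j
    rw [pow_zero]
    by_cases h : i = j <;> simp [Matrix.one_apply, h]
  | succ m ih =>
    intro i j
    rw [pow_succ]
    exact mul_entry_nonneg ih hM i j

private lemma pow_entry_mono {M N : Matrix (Fin n) (Fin n) ℝ}
    (hM : ∀ i j, 0 ≤ M i j) (h : ∀ i j, M i j ≤ N i j) (k : ℕ) :
    ∀ i j, (M ^ k) i j ≤ (N ^ k) i j := by
  induction k with
  | zero => intro i j; rw [pow_zero, pow_zero]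
  | succ m ih =>
    intro i j
    rw [pow_succ, pow_succ]
    exact mul_entry_mono (pow_entry_nonneg hM m) hM ih h i j

/-- The matrix `N₋ₚ`. -/
private def Nmat (α δ s : Fin n → ℝ) (B : Matrix (Fin n) (Fin n) ℝ)
    (P : Finset (Fin n × Fin n)) : Matrix (Fin n) (Fin n) ℝ :=
  1 - Matrix.diagonal δ + Matrix.diagonal α * Matrix.diagonal s * Bdel B P

private lemma Nmat_apply (α δ s : Fin n → ℝ) (B : Matrix (Fin n) (Fin n) ℝ)
    (P : Finset (Fin n × Fin n)) (i j : Fin n) :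
    Nmat α δ s B P i j =
      ((if i = j then (1:ℝ) else 0) - (if i = j then δ i else 0)) +
        (α i * s i) * Bdel B P i j := by
  simp [Nmat, Matrix.add_apply, Matrix.sub_apply, Matrix.one_apply,
    Matrix.diagonal_mul_diagonal, Matrix.diagonal_mul, Matrix.diagonal_apply]

private lemma sigmaL_eq (α ω δ δ' s x0 y0 : Fin n → ℝ) (B : Matrix (Fin n) (Fin n) ℝ)
    (P : Finset (Fin n × Fin n)) (S : Matrix (Fin n) (Fin n) ℝ)
    (h : (1 - Nmat α δ s B P)⁻¹ = S) :
    sigmaL α ω δ δ' s x0 y0 B P =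
      (fun _ => (1 : ℝ)) ⬝ᵥ
        ((Matrix.diagonal α)⁻¹ * (Matrix.diagonal δ * S - 1)) *ᵥ
        (x0 + (Matrix.diagonal ω * (Matrix.diagonal ω + Matrix.diagonal δ')⁻¹) *ᵥ y0) := by
  unfold Nmat at h
  unfold sigmaL
  rw [h]

end Aux

/-- Lemma 2 (second part): `σᴸ` is supermodular on subsets of the candidate set. -/
theorem sigmaL_supermodular
    (n : ℕ) (hn : 1 ≤ n) (α ω δ δ' s : Fin n → ℝ)
    (hα : ∀ i, 0 < α i ∧ α i ≤ 1) (hω : ∀ i, 0 ≤ ω i ∧ ω i ≤ 1)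
    (hδ : ∀ i, 0 ≤ δ i ∧ δ i ≤ 1) (hδ' : ∀ i, 0 ≤ δ' i ∧ δ' i ≤ 1)
    (hs : ∀ i, 0 ≤ s i ∧ s i ≤ 1) (hωδ' : ∀ i, ω i + δ' i ≤ 1)
    (hωδ'pos : ∀ i, 0 < ω i + δ' i)
    (B : Matrix (Fin n) (Fin n) ℝ) (hB : ∀ i j, 0 ≤ B i j)
    (x0 y0 : Fin n → ℝ) (hx0 : ∀ i, 0 ≤ x0 i) (hy0 : ∀ i, 0 ≤ y0 i)
    (Qc : Finset (Fin n × Fin n))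
    (hρ : ∀ P ⊆ Qc, specRad
      (1 - Matrix.diagonal δ + Matrix.diagonal α * Matrix.diagonal s * Bdel B P) < 1) :
    ∀ P P' : Finset (Fin n × Fin n), ∀ e : Fin n × Fin n,
      P ⊆ P' → P' ⊆ Qc → e ∈ Qc → e ∉ P' →
      sigmaL α ω δ δ' s x0 y0 B (insert e P) - sigmaL α ω δ δ' s x0 y0 B P ≤
        sigmaL α ω δ δ' s x0 y0 B (insert e P') - sigmaL α ω δ δ' s x0 y0 B P' := by
  intro P P' e hPP' hP'Q heQ heP'
  classical
  have hPQ : P ⊆ Qc := hPP'.trans hP'Q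
  have heP : e ∉ P := fun h => heP' (hPP' h)
  have hPeQ : insert e P ⊆ Qc := Finset.insert_subset heQ hPQ
  have hP'eQ : insert e P' ⊆ Qc := Finset.insert_subset heQ hP'Q
  -- basic entrywise facts about Bdel and Nmat
  have hBdel0 : ∀ (Pa : Finset (Fin n × Fin n)) i j, 0 ≤ Bdel B Pa i j := by
    intro Pa i j
    simp only [Bdel, Matrix.of_apply]
    split
    · exact le_refl 0
    · exact hB i j
  have hBdelm : ∀ (Pa Pb : Finset (Fin n × Fin n)), Pa ⊆ Pb →
      ∀ i j, Bdel B Pb i j ≤ Bdel B Pa i j := by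
    intro Pa Pb hab i j
    simp only [Bdel, Matrix.of_apply]
    by_cases h : (i, j) ∈ Pa
    · rw [if_pos h, if_pos (hab h)]
    · rw [if_neg h]
      split
      · exact hB i j
      · exact le_refl _
  have hN0 : ∀ (Pa : Finset (Fin n × Fin n)) i j, 0 ≤ Nmat α δ s B Pa i j := by
    intro Pa i j
    rw [Nmat_apply]
    have hprod : 0 ≤ α i * s i * Bdel B Pa i j :=
      mul_nonneg (mul_nonneg (hα i).1.le (hs i).1) (hBdel0 Pa i j)
    by_cases h : i = j
    · simp only [if_pos h]
      have := (hδ i).2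
      linarith
    · simp only [if_neg h]
      linarith
  have hNm : ∀ (Pa Pb : Finset (Fin n × Fin n)), Pa ⊆ Pb →
      ∀ i j, Nmat α δ s B Pb i j ≤ Nmat α δ s B Pa i j := by
    intro Pa Pb hab i j
    rw [Nmat_apply, Nmat_apply]
    have := mul_le_mul_of_nonneg_left (hBdelm Pa Pb hab i j)
      (mul_nonneg (hα i).1.le (hs i).1)
    linarith
  -- the single-edge perturbation matrix
  set E : Matrix (Fin n) (Fin n) ℝ :=
    Matrix.of (fun i j => if (i, j) = e then α i * s i * B i j else 0) with hE
  have hE0 : ∀ i j, 0 ≤ E i j := by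
    intro i j
    simp only [hE, Matrix.of_apply]
    split
    · exact mul_nonneg (mul_nonneg (hα i).1.le (hs i).1) (hB i j)
    · exact le_refl _
  have hNe : ∀ (Pa : Finset (Fin n × Fin n)), e ∉ Pa →
      Nmat α δ s B (insert e Pa) = Nmat α δ s B Pa - E := by
    intro Pa hePa
    ext i j
    rw [Matrix.sub_apply, Nmat_apply, Nmat_apply]
    simp only [hE, Matrix.of_apply, Bdel, Finset.mem_insert]
    by_cases h : (i, j) = e
    · have hnot : (i, j) ∉ Pa := h ▸ hePa
      rw [if_pos (Or.inl h), if_pos h, if_neg hnot]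
      ring
    · rw [if_neg h]
      by_cases h2 : (i, j) ∈ Pa
      · rw [if_pos (Or.inr h2), if_pos h2]; ring
      · rw [if_neg (show ¬((i, j) = e ∨ (i, j) ∈ Pa) from by tauto), if_neg h2]; ring
  -- Neumann series for the four edge sets
  obtain ⟨S1, hsum1, hL1, hR1, hinv1⟩ := neumann (Nmat α δ s B (insert e P)) (hρ _ hPeQ)
  obtain ⟨S2, hsum2, hL2, hR2, hinv2⟩ := neumann (Nmat α δ s B P) (hρ _ hPQ)
  obtain ⟨S3, hsum3, hL3, hR3, hinv3⟩ := neumann (Nmat α δ s B (insert e P')) (hρ _ hP'eQ)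
  obtain ⟨S4, hsum4, hL4, hR4, hinv4⟩ := neumann (Nmat α δ s B P') (hρ _ hP'Q)
  -- nonnegativity and monotonicity of the Neumann sums, entrywise
  have hSnn : ∀ (Pa : Finset (Fin n × Fin n)) (S : Matrix (Fin n) (Fin n) ℝ),
      HasSum (fun k => Nmat α δ s B Pa ^ k) S → ∀ i j, 0 ≤ S i j := by
    intro Pa S hS i j
    exact hasSum_le (fun k => pow_entry_nonneg (hN0 Pa) k i j) hasSum_zero
      (hasSum_entry hS i j)
  have hSm : ∀ (Pa Pb : Finset (Fin n × Fin n)) (Sa Sb : Matrix (Fin n) (Fin n) ℝ),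
      Pa ⊆ Pb → HasSum (fun k => Nmat α δ s B Pa ^ k) Sa →
      HasSum (fun k => Nmat α δ s B Pb ^ k) Sb → ∀ i j, Sb i j ≤ Sa i j := by
    intro Pa Pb Sa Sb hab hSa hSb i j
    exact hasSum_le (fun k => pow_entry_mono (hN0 Pb) (hNm Pa Pb hab) k i j)
      (hasSum_entry hSb i j) (hasSum_entry hSa i j)
  have hS1nn := hSnn _ _ hsum1
  have hS2nn := hSnn _ _ hsum2
  have hS3nn := hSnn _ _ hsum3
  have hS4nn := hSnn _ _ hsum4
  have hS42 := hSm P P' S2 S4 hPP' hsum2 hsum4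
  have hS31 := hSm (insert e P) (insert e P') S1 S3
    (Finset.insert_subset_insert e hPP') hsum1 hsum3
  -- resolvent identity: Sₚ − Sₚ₊ₑ = Sₚ * E * Sₚ₊ₑ
  have hres : ∀ (Pa : Finset (Fin n × Fin n)) (Sa Se : Matrix (Fin n) (Fin n) ℝ),
      e ∉ Pa → Sa * (1 - Nmat α δ s B Pa) = 1 →
      (1 - Nmat α δ s B (insert e Pa)) * Se = 1 → Sa * E * Se = Sa - Se := by
    intro Pa Sa Se hePa hRa hLe
    have heab : E = (1 - Nmat α δ s B (insert e Pa)) - (1 - Nmat α δ s B Pa) := by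
      rw [hNe Pa hePa]; abel
    calc Sa * E * Se
        = Sa * (1 - Nmat α δ s B (insert e Pa)) * Se
          - Sa * (1 - Nmat α δ s B Pa) * Se := by rw [heab]; noncomm_ring
      _ = Sa - Se := by rw [mul_assoc Sa, hLe, mul_one, hRa, one_mul]
  have h1 : S2 * E * S1 = S2 - S1 := hres P S2 S1 heP hR2 hL1
  have h2 : S4 * E * S3 = S4 - S3 := hres P' S4 S3 heP' hR4 hL3
  -- entrywise core inequality
  have hcore : ∀ i j, S1 i j + S4 i j ≤ S3 i j + S2 i j := by
    intro i j
    have ht : (S4 * E * S3) i j ≤ (S2 * E * S1) i j := by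
      refine mul_entry_mono (mul_entry_nonneg hS4nn hE0) hS3nn ?_ (fun i j => hS31 i j) i j
      intro i j
      exact mul_entry_mono hS4nn hE0 (fun i j => hS42 i j) (fun i j => le_refl _) i j
    have e1 : (S2 * E * S1) i j = S2 i j - S1 i j := by
      rw [h1, Matrix.sub_apply]
    have e2 : (S4 * E * S3) i j = S4 i j - S3 i j := by
      rw [h2, Matrix.sub_apply]
    linarith
  -- nonnegativity of the weight vector and the coefficient matrix
  have hAinv : (Matrix.diagonal α)⁻¹ = Matrix.diagonal (fun i => (α i)⁻¹) := by
    refine Matrix.inv_eq_right_inv ?_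
    ext i j
    rw [Matrix.diagonal_mul_diagonal, Matrix.diagonal_apply, Matrix.one_apply]
    by_cases h : i = j
    · simp only [if_pos h, Pi.mul_apply]
      exact mul_inv_cancel₀ (ne_of_gt (hα i).1)
    · simp only [if_neg h]
  have hWinv : (Matrix.diagonal ω + Matrix.diagonal δ')⁻¹ =
      Matrix.diagonal (fun i => (ω i + δ' i)⁻¹) := by
    rw [Matrix.diagonal_add]
    refine Matrix.inv_eq_right_inv ?_
    ext i j
    rw [Matrix.diagonal_mul_diagonal, Matrix.diagonal_apply, Matrix.one_apply]
    by_cases h : i = j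
    · simp only [if_pos h, Pi.mul_apply]
      exact mul_inv_cancel₀ (ne_of_gt (hωδ'pos i))
    · simp only [if_neg h]
  set v : Fin n → ℝ :=
    x0 + (Matrix.diagonal ω * (Matrix.diagonal ω + Matrix.diagonal δ')⁻¹) *ᵥ y0 with hv
  have hv0 : ∀ i, 0 ≤ v i := by
    intro i
    rw [hv]
    simp only [Pi.add_apply]
    refine add_nonneg (hx0 i) ?_
    rw [hWinv, Matrix.diagonal_mul_diagonal]
    simp only [Matrix.mulVec, dotProduct]
    refine Finset.sum_nonneg fun j _ => ?_
    rw [Matrix.diagonal_apply]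
    split
    · exact mul_nonneg (mul_nonneg (hω i).1 (inv_nonneg.mpr (hωδ'pos i).le)) (hy0 j)
    · simp
  have hC0 : ∀ i j, 0 ≤ ((Matrix.diagonal α)⁻¹ * Matrix.diagonal δ) i j := by
    intro i j
    rw [hAinv, Matrix.diagonal_mul_diagonal, Matrix.diagonal_apply]
    split
    · exact mul_nonneg (inv_nonneg.mpr (hα i).1.le) (hδ i).1
    · exact le_refl _
  -- rewrite the four sigmaL values
  rw [sigmaL_eq α ω δ δ' s x0 y0 B (insert e P) S1 hinv1,
    sigmaL_eq α ω δ δ' s x0 y0 B P S2 hinv2,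
    sigmaL_eq α ω δ δ' s x0 y0 B (insert e P') S3 hinv3,
    sigmaL_eq α ω δ δ' s x0 y0 B P' S4 hinv4]
  rw [← hv]
  rw [sub_le_sub_iff]
  -- combine the two sides into single dot products
  have hcomb : ∀ X Y : Matrix (Fin n) (Fin n) ℝ,
      ((fun _ => (1:ℝ)) ⬝ᵥ X *ᵥ v) + ((fun _ => (1:ℝ)) ⬝ᵥ Y *ᵥ v) =
        (fun _ => (1:ℝ)) ⬝ᵥ (X + Y) *ᵥ v := by
    intro X Y
    rw [Matrix.add_mulVec, dotProduct_add]
  rw [hcomb, hcomb]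
  -- monotonicity of the functional
  have hFle : ∀ X Y : Matrix (Fin n) (Fin n) ℝ, (∀ i j, X i j ≤ Y i j) →
      (fun _ => (1:ℝ)) ⬝ᵥ X *ᵥ v ≤ (fun _ => (1:ℝ)) ⬝ᵥ Y *ᵥ v := by
    intro X Y h
    simp only [dotProduct, Matrix.mulVec, one_mul]
    refine Finset.sum_le_sum fun i _ => Finset.sum_le_sum fun j _ =>
      mul_le_mul_of_nonneg_right (h i j) (hv0 j)
  refine hFle _ _ ?_
  have halg : ∀ X Y : Matrix (Fin n) (Fin n) ℝ,
      (Matrix.diagonal α)⁻¹ * (Matrix.diagonal δ * X - 1) +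
        (Matrix.diagonal α)⁻¹ * (Matrix.diagonal δ * Y - 1) =
      ((Matrix.diagonal α)⁻¹ * Matrix.diagonal δ) * (X + Y) -
        ((Matrix.diagonal α)⁻¹ + (Matrix.diagonal α)⁻¹) := by
    intro X Y
    noncomm_ring
  rw [halg, halg]
  intro i j
  rw [Matrix.sub_apply, Matrix.sub_apply]
  refine sub_le_sub_right ?_ _
  refine mul_entry_mono hC0 ?_ (fun i j => le_refl _) ?_ i j
  · intro i j
    rw [Matrix.add_apply]
    exact add_nonneg (hS1nn i j) (hS4nn i j)
  · intro i j
    rw [Matrix.add_apply, Matrix.add_apply]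
    exact hcore i j
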